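/- Fix (x₂,x₃) ∈ ℝ² and set ω_x := {t ∈ ℝ : (t,x₂,x₃) ∈ Ω}. Then for every real-valued continuously differentiable function g on ℝ with compact support which vanishes at every point of ℝ \ ω_x, one has ∫_ℝ g'(t)² dt ≥ ∫_{θ₊⁻¹(θ(0)+2π)}^{∞} (θ'(θ₊⁻¹(θ(t) − π)))² g(t)² dt. (This is the one-dimensional slice estimate, inequality (final+) in the proof of Lemma 3.1.) -/

import Mathlib

open Real Set Filter MeasureTheory intervalIntegral Topology

-- x / sin x → 1 at 0
lemma aux_div_sin : Tendsto (fun x : ℝ => x / Real.sin x) (𝓝[≠] (0:ℝ)) (𝓝 1) := by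
  have h := hasDerivAt_iff_tendsto_slope.1 (Real.hasDerivAt_sin 0)
  rw [Real.cos_zero] at h
  have h2 : Tendsto (fun x : ℝ => (slope Real.sin 0 x)⁻¹) (𝓝[≠] (0:ℝ)) (𝓝 1) := by
    simpa using h.inv₀ one_ne_zero
  refine h2.congr' ?_
  filter_upwards [self_mem_nhdsWithin] with x hx
  have hx0 : x ≠ 0 := hx
  rw [slope_def_field]
  rcases eq_or_ne (Real.sin x) 0 with hs | hs
  · simp [hs, div_eq_mul_inv, sub_zero]
  · simp only [Real.sin_zero, sub_zero]
    field_simp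

lemma aux_tendsto_F {g : ℝ → ℝ} (hg : ContDiff ℝ 1 g) {a : ℝ} (hga : g a = 0) (c : ℝ) (hc : 0 < c) :
    Tendsto (fun α => c * Real.cos (c*(α-a)) / Real.sin (c*(α-a)) * (g α)^2) (𝓝[>] a) (𝓝 0) := by
  have hder : HasDerivAt g (deriv g a) a :=
    ((hg.differentiable one_ne_zero) a).hasDerivAt
  have hslope : Tendsto (slope g a) (𝓝[>] a) (𝓝 (deriv g a)) :=
    (hasDerivAt_iff_tendsto_slope.1 hder).mono_left (nhdsWithin_mono _ (fun x hx => ne_of_gt hx))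
  -- (α - a) / sin (c * (α - a)) → 1/c
  have hmap : Tendsto (fun α : ℝ => c*(α-a)) (𝓝[>] a) (𝓝[≠] (0:ℝ)) := by
    rw [tendsto_nhdsWithin_iff]
    constructor
    · have : Tendsto (fun α : ℝ => c*(α-a)) (𝓝 a) (𝓝 (c*(a-a))) :=
        (tendsto_id.sub_const a).const_mul c
      simpa using this.mono_left nhdsWithin_le_nhds
    · filter_upwards [self_mem_nhdsWithin] with α (hα : a < α)
      have h1 : 0 < α - a := sub_pos.2 hα
      have : 0 < c*(α-a) := mul_pos hc h1
      exact ne_of_gt this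
  have hsin : Tendsto (fun α : ℝ => (α-a) / Real.sin (c*(α-a))) (𝓝[>] a) (𝓝 (1/c)) := by
    have h1 : Tendsto (fun α : ℝ => (1/c) * ((c*(α-a)) / Real.sin (c*(α-a)))) (𝓝[>] a)
        (𝓝 ((1/c) * 1)) := ((aux_div_sin.comp hmap)).const_mul (1/c)
    refine (h1.congr (fun α => ?_)).mono_right (by rw [mul_one])
    rcases eq_or_ne (Real.sin (c*(α-a))) 0 with hs | hs
    · simp [hs]
    · field_simp
  have hcos : Tendsto (fun α : ℝ => c * Real.cos (c*(α-a))) (𝓝[>] a) (𝓝 (c * 1)) := by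
    have : Tendsto (fun α : ℝ => c * Real.cos (c*(α-a))) (𝓝 a) (𝓝 (c * Real.cos (c*(a-a)))) := by
      exact (Real.continuous_cos.tendsto _).comp (((tendsto_id.sub_const a).const_mul c)) |>.const_mul c
    simpa using this.mono_left nhdsWithin_le_nhds
  have hsub : Tendsto (fun α : ℝ => α - a) (𝓝[>] a) (𝓝 0) := by
    have : Tendsto (fun α : ℝ => α - a) (𝓝 a) (𝓝 (a-a)) := tendsto_id.sub_const a
    simpa using this.mono_left nhdsWithin_le_nhds
  have hprod : Tendsto (fun α => (c * Real.cos (c*(α-a))) * ((slope g a α)^2 *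
      (((α-a) / Real.sin (c*(α-a))) * (α - a)))) (𝓝[>] a)
      (𝓝 ((c*1) * ((deriv g a)^2 * ((1/c) * 0)))) :=
    hcos.mul (((hslope.pow 2)).mul (hsin.mul hsub))
  have hzero : ((c*1 : ℝ) * ((deriv g a)^2 * ((1/c) * 0))) = 0 := by ring
  rw [hzero] at hprod
  refine hprod.congr' ?_
  filter_upwards [self_mem_nhdsWithin] with α (hα : a < α)
  have hαa : α - a ≠ 0 := ne_of_gt (sub_pos.2 hα)
  rw [slope_def_field, hga, sub_zero]
  rcases eq_or_ne (Real.sin (c*(α-a))) 0 with hs | hs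
  · simp [hs]
  · field_simp

lemma aux_tendsto_F' {g : ℝ → ℝ} (hg : ContDiff ℝ 1 g) {a b : ℝ} (hgb : g b = 0)
    {c : ℝ} (hc : 0 < c) (hcb : c * (b - a) = π) :
    Tendsto (fun β => c * Real.cos (c*(β-a)) / Real.sin (c*(β-a)) * (g β)^2) (𝓝[<] b) (𝓝 0) := by
  have hg' : ContDiff ℝ 1 (fun x => g (a + b - x)) :=
    hg.comp (contDiff_const.sub contDiff_id)
  have haux := aux_tendsto_F hg' (a := a) (by simpa using hgb) c hc
  have hmap : Tendsto (fun β : ℝ => a + b - β) (𝓝[<] b) (𝓝[>] a) := by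
    rw [tendsto_nhdsWithin_iff]
    constructor
    · have h0 : Tendsto (fun β : ℝ => a + b - β) (𝓝 b) (𝓝 (a + b - b)) :=
        (tendsto_const_nhds.sub tendsto_id)
      simpa using h0.mono_left nhdsWithin_le_nhds
    · filter_upwards [self_mem_nhdsWithin] with β (hβ : β < b)
      show a < a + b - β
      linarith
  have hcomp := (haux.comp hmap).neg
  rw [neg_zero] at hcomp
  refine hcomp.congr (fun β => ?_)
  show -(c * Real.cos (c*((a+b-β)-a)) / Real.sin (c*((a+b-β)-a)) * (g (a + b - (a+b-β)))^2)
      = c * Real.cos (c*(β-a)) / Real.sin (c*(β-a)) * (g β)^2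
  have h2 : a + b - (a+b-β) = β := by ring
  have h4 : c * (β - a) = π - c * ((a+b-β)-a) := by rw [← hcb]; ring
  rw [h2, h4, Real.cos_pi_sub, Real.sin_pi_sub]
  ring

lemma wirtinger {g : ℝ → ℝ} (hg : ContDiff ℝ 1 g) {a b : ℝ} (hab : a < b)
    (hga : g a = 0) (hgb : g b = 0) :
    (π/(b-a))^2 * ∫ t in a..b, (g t)^2 ≤ ∫ t in a..b, (deriv g t)^2 := by
  have hgc : Continuous g := hg.continuous
  have hgd : ∀ t, HasDerivAt g (deriv g t) t := fun t => ((hg.differentiable one_ne_zero) t).hasDerivAt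
  have hg'c : Continuous (deriv g) := hg.continuous_deriv le_rfl
  set L := b - a with hL
  have hL0 : 0 < L := sub_pos.2 hab
  set c := π / L with hcdef
  have hc : 0 < c := div_pos Real.pi_pos hL0
  have hcb : c * (b - a) = π := by
    rw [hcdef, ← hL]; field_simp
  have hsinpos : ∀ t ∈ Ioo a b, 0 < Real.sin (c*(t-a)) := by
    intro t ht
    apply Real.sin_pos_of_pos_of_lt_pi
    · have : 0 < t - a := sub_pos.2 ht.1
      positivity
    · rw [← hcb]
      have : t - a < b - a := by linarith [ht.2]
      exact (mul_lt_mul_iff_right₀ hc).2 this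
  -- the auxiliary function and its derivative
  set F : ℝ → ℝ := fun t => c * Real.cos (c*(t-a)) / Real.sin (c*(t-a)) * (g t)^2 with hFdef
  set ψ : ℝ → ℝ := fun t => c * Real.cos (c*(t-a)) / Real.sin (c*(t-a)) with hψdef
  set D : ℝ → ℝ := fun t => (deriv g t)^2 - c^2*(g t)^2 - (deriv g t - ψ t * g t)^2 with hDdef
  have hF : ∀ t ∈ Ioo a b, HasDerivAt F (D t) t := by
    intro t ht
    have hs := hsinpos t ht
    have hinner : HasDerivAt (fun t : ℝ => c*(t-a)) c t := by
      simpa using ((hasDerivAt_id t).sub_const a).const_mul c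
    have hcos : HasDerivAt (fun t : ℝ => c * Real.cos (c*(t-a))) (-Real.sin (c*(t-a)) * c * c) t := by
      have h0 : HasDerivAt (fun t : ℝ => Real.cos (c*(t-a))) (-Real.sin (c*(t-a)) * c) t :=
        hinner.cos
      simpa [mul_comm, mul_assoc, mul_left_comm] using h0.const_mul c
    have hsin : HasDerivAt (fun t : ℝ => Real.sin (c*(t-a))) (Real.cos (c*(t-a)) * c) t :=
      hinner.sin
    have hquot := hcos.div hsin (ne_of_gt hs)
    have hsq : HasDerivAt (fun t => (g t)^2) (2 * g t ^ 1 * deriv g t) t := (hgd t).pow 2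
    have hmul := hquot.mul hsq
    refine (hmul.congr_deriv ?_)
    rw [hDdef, hψdef]
    have hsne := ne_of_gt hs
    simp only [Pi.div_apply]
    field_simp
    ring
  have hfc : Continuous (fun t => (deriv g t)^2 - c^2*(g t)^2) :=
    (hg'c.pow 2).sub (continuous_const.mul (hgc.pow 2))
  set f : ℝ → ℝ := fun t => (deriv g t)^2 - c^2*(g t)^2 with hfdef
  have hfint : ∀ u v : ℝ, IntervalIntegrable f volume u v := fun u v => hfc.intervalIntegrable u v
  set Φ : ℝ → ℝ := fun x => ∫ t in a..x, f t with hΦdef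
  have hΦcont : Continuous Φ := intervalIntegral.continuous_primitive hfint a
  have hψcont : ContinuousOn ψ (Ioo a b) := by
    apply ContinuousOn.div
    · exact (continuous_const.mul ((Real.continuous_cos.comp
        (continuous_const.mul (continuous_id.sub continuous_const))))).continuousOn
    · exact (Real.continuous_sin.comp
        (continuous_const.mul (continuous_id.sub continuous_const))).continuousOn
    · exact fun t ht => ne_of_gt (hsinpos t ht)
  have step : ∀ α β, α ∈ Ioo a b → β ∈ Ioo a b → α ≤ β → F β - F α ≤ Φ β - Φ α := by
    intro α β hα hβ hαβ
    have huIcc : uIcc α β ⊆ Ioo a b := by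
      rw [uIcc_of_le hαβ]
      exact Icc_subset_Ioo hα.1 hβ.2
    have hsqcont : ContinuousOn (fun t => (deriv g t - ψ t * g t)^2) (uIcc α β) :=
      (((hg'c.continuousOn).sub ((hψcont.mono huIcc).mul hgc.continuousOn)).pow 2)
    have hDcont : ContinuousOn D (uIcc α β) := (hfc.continuousOn).sub hsqcont
    have hint : IntervalIntegrable D volume α β := hDcont.intervalIntegrable
    have hFTC := intervalIntegral.integral_eq_sub_of_hasDerivAt
      (fun t ht => hF t (huIcc ht)) hint
    have hψg : IntervalIntegrable (fun t => (deriv g t - ψ t * g t)^2) volume α β :=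
      hsqcont.intervalIntegrable
    have hsplit : ∫ t in α..β, D t
        = (∫ t in α..β, f t) - ∫ t in α..β, (deriv g t - ψ t * g t)^2 := by
      rw [← intervalIntegral.integral_sub (hfint α β) hψg]
    have hnn : 0 ≤ ∫ t in α..β, (deriv g t - ψ t * g t)^2 :=
      intervalIntegral.integral_nonneg hαβ (fun u _ => sq_nonneg _)
    have hΦdiff : Φ β - Φ α = ∫ t in α..β, f t :=
      intervalIntegral.integral_interval_sub_left (hfint a β) (hfint a α)
    rw [hΦdiff]
    linarith [hFTC, hsplit, hnn]
  have step2 : ∀ β ∈ Ioo a b, F β ≤ Φ β := by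
    intro β hβ
    have hFlim : Tendsto F (𝓝[>] a) (𝓝 0) := aux_tendsto_F hg hga c hc
    have h1 : Tendsto (fun α => F β - F α) (𝓝[>] a) (𝓝 (F β - 0)) :=
      tendsto_const_nhds.sub hFlim
    have h2 : Tendsto (fun α => Φ β - Φ α) (𝓝[>] a) (𝓝 (Φ β - Φ a)) :=
      tendsto_const_nhds.sub ((hΦcont.tendsto a).mono_left nhdsWithin_le_nhds)
    have hev : ∀ᶠ α in 𝓝[>] a, F β - F α ≤ Φ β - Φ α := by
      filter_upwards [Ioo_mem_nhdsGT_of_mem ⟨le_refl a, hβ.1⟩] with α hα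
      exact step α β ⟨hα.1, lt_trans hα.2 hβ.2⟩ hβ (le_of_lt hα.2)
    have hle := le_of_tendsto_of_tendsto h1 h2 hev
    have hΦa : Φ a = 0 := intervalIntegral.integral_same
    rw [hΦa] at hle
    linarith
  have step3 : 0 ≤ Φ b := by
    have hFlim : Tendsto F (𝓝[<] b) (𝓝 0) := aux_tendsto_F' hg hgb hc hcb
    have h2 : Tendsto Φ (𝓝[<] b) (𝓝 (Φ b)) :=
      (hΦcont.tendsto b).mono_left nhdsWithin_le_nhds
    have hev : ∀ᶠ β in 𝓝[<] b, F β ≤ Φ β := by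
      filter_upwards [Ioo_mem_nhdsLT_of_mem ⟨hab, le_refl b⟩] with β hβ
      exact step2 β hβ
    exact le_of_tendsto_of_tendsto hFlim h2 hev
  have hΦb : Φ b = (∫ t in a..b, (deriv g t)^2) - c^2 * ∫ t in a..b, (g t)^2 := by
    rw [hΦdef]
    simp only [hfdef]
    rw [intervalIntegral.integral_sub (f := fun t => deriv g t ^ 2) (g := fun t => c^2 * g t ^ 2) ((hg'c.pow 2).intervalIntegrable a b)
      ((continuous_const.mul (hgc.pow 2)).intervalIntegrable a b),
      intervalIntegral.integral_const_mul]
  have hc2 : (π/(b-a))^2 = c^2 := by rw [hcdef, hL]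
  rw [hc2]
  linarith [step3, hΦb.symm.le, hΦb.le]

lemma aux_near (u : ℝ) (hu : 0 ≤ Real.cos u) :
    ∃ k : ℤ, -(π/2) + 2*k*π ≤ u ∧ u ≤ π/2 + 2*k*π := by
  set k := round (u / (2*π)) with hk
  have h2π : (0:ℝ) < 2*π := by positivity
  have habs : |u / (2*π) - k| ≤ 1/2 := abs_sub_round _
  have hd : |u - 2*k*π| ≤ π := by
    have h12 := (abs_le.1 habs)
    have key : u - 2*(k:ℝ)*π = (u/(2*π) - k) * (2*π) := by field_simp
    rw [abs_le]
    constructor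
    · nlinarith [h12.1]
    · nlinarith [h12.2]
  have hcosd : 0 ≤ Real.cos (u - 2*k*π) := by
    have : u - 2*k*π = u - k*(2*π) := by ring
    rw [this, Real.cos_sub_int_mul_two_pi]
    exact hu
  refine ⟨k, ?_, ?_⟩
  · by_contra hlt
    push_neg at hlt
    have h1 : π/2 < -(u - 2*k*π) := by linarith
    have h2 : -(u - 2*k*π) < π + π/2 := by
      have := (abs_le.1 hd).1; linarith
    have := Real.cos_neg_of_pi_div_two_lt_of_lt h1 h2
    rw [Real.cos_neg] at this
    linarith
  · by_contra hlt
    push_neg at hlt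
    have h1 : π/2 < u - 2*k*π := by linarith
    have h2 : u - 2*k*π < π + π/2 := by
      have := (abs_le.1 hd).2; linarith
    have := Real.cos_neg_of_pi_div_two_lt_of_lt h1 h2
    linarith

lemma cos_span {x y φ : ℝ} (hxy : x ≤ y) (h : ∀ z ∈ Icc x y, 0 ≤ Real.cos (z + φ)) :
    y - x ≤ π := by
  by_contra hlt
  push_neg at hlt
  have hπ := Real.pi_pos
  obtain ⟨k, hk1, hk2⟩ := aux_near (x + φ) (h x ⟨le_refl x, hxy⟩)
  obtain ⟨m, hm1, hm2⟩ := aux_near (y + φ) (h y ⟨hxy, le_refl y⟩)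
  have hmk : (k:ℝ) + 1 ≤ m := by
    have h1 : 2*(k:ℝ)*π + π/2 + π < 2*m*π + π/2 + π/2 + π/2 := by nlinarith
    have h2 : (k:ℝ) < m := by nlinarith
    exact_mod_cast Int.add_one_le_iff.2 (by exact_mod_cast h2)
  set p : ℝ := π + 2*k*π with hp
  have hpu : x + φ ≤ p := by linarith
  have hpv : p ≤ y + φ := by nlinarith
  have hz : p - φ ∈ Icc x y := ⟨by linarith, by linarith⟩
  have := h (p - φ) hz
  have hcosp : Real.cos (p - φ + φ) = -1 := by
    have : p - φ + φ = π + k*(2*π) := by rw [hp]; ring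
    rw [this, Real.cos_add_int_mul_two_pi, Real.cos_pi]
  rw [hcosp] at this
  linarith

theorem slice_estimate_plus
    (ω : Set (ℝ × ℝ)) (hω_ne : ω.Nonempty) (hω_bdd : Bornology.IsBounded ω)
    (hω_open : IsOpen ω) (hω_conn : IsConnected ω)
    (hω_half : ω ⊆ {y : ℝ × ℝ | 0 < y.1})
    (θ θ' : ℝ → ℝ)
    (hθ : ∀ x, HasDerivAt θ (θ' x) x) (hθ'c : Continuous θ')
    (hmono : Monotone θ')
    (hpos : ∀ x, 0 ≤ x → 0 ≤ θ' x) (hneg : ∀ x, x ≤ 0 → θ' x ≤ 0)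
    (hinf : Tendsto (fun x => |θ' x|) (cocompact ℝ) atTop)
    (Ω : Set (ℝ × ℝ × ℝ))
    (hΩ : Ω = (fun q : ℝ × ℝ × ℝ =>
      (q.1, q.2.1 * Real.cos (θ q.1) + q.2.2 * Real.sin (θ q.1),
       q.2.2 * Real.cos (θ q.1) - q.2.1 * Real.sin (θ q.1))) '' (Set.univ ×ˢ ω))
    (θinvp : ℝ → ℝ)
    (hinvp : ∀ α, θ 0 ≤ α →
      0 ≤ θinvp α ∧ θ (θinvp α) = α ∧ ∀ z, 0 ≤ z → θ z = α → θinvp α ≤ z)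
    (x₂ x₃ : ℝ)
    (g : ℝ → ℝ) (hg : ContDiff ℝ 1 g) (hgsupp : HasCompactSupport g)
    (hgvanish : ∀ t : ℝ, (t, x₂, x₃) ∉ Ω → g t = 0) :
    ∫ t in Set.Ioi (θinvp (θ 0 + 2 * π)),
        (θ' (θinvp (θ t - π))) ^ 2 * (g t) ^ 2 ≤
      ∫ t : ℝ, (deriv g t) ^ 2 := by
  have hπ := Real.pi_pos
  have hgc : Continuous g := hg.continuous
  have hg'c : Continuous (deriv g) := hg.continuous_deriv le_rfl
  have hθc : Continuous θ := by
    rw [continuous_iff_continuousAt]; exact fun x => (hθ x).continuousAt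
  set T : ℝ := θinvp (θ 0 + 2 * π) with hTdef
  obtain ⟨hT0, hTval, -⟩ := hinvp (θ 0 + 2 * π) (by linarith)
  -- monotonicity of θ on [0, ∞)
  have hθmono : MonotoneOn θ (Ici 0) := by
    apply monotoneOn_of_deriv_nonneg (convex_Ici 0) hθc.continuousOn
    · exact fun x _ => ((hθ x).differentiableAt).differentiableWithinAt
    · intro x hx
      rw [(hθ x).deriv]
      rw [interior_Ici] at hx
      exact hpos x (le_of_lt hx)
  -- mean value bound
  have hslope : ∀ s t : ℝ, s ≤ t → (t - s) * θ' s ≤ θ t - θ s := by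
    intro s t hst
    rcases eq_or_lt_of_le hst with rfl | hlt
    · simp
    · obtain ⟨ξ, hξ, hval⟩ := exists_hasDerivAt_eq_slope θ θ' hlt hθc.continuousOn
        (fun x _ => hθ x)
    -- θ' ξ = (θ t - θ s)/(t - s)
      have h1 : θ' s ≤ θ' ξ := hmono (le_of_lt hξ.1)
      have hne : t - s ≠ 0 := ne_of_gt (sub_pos.2 hlt)
      have h2 : (t - s) * θ' ξ = θ t - θ s := by
        rw [hval, mul_comm, div_mul_cancel₀ _ hne]
      nlinarith [sub_pos.2 hlt]
  -- θ grows without bound to the right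
  have hbig : ∀ t C : ℝ, ∃ u, t ≤ u ∧ θ t + C ≤ θ u := by
    have hev : ∀ᶠ x in cocompact ℝ, 1 ≤ |θ' x| := hinf.eventually (eventually_ge_atTop 1)
    rw [cocompact_eq_atBot_atTop, eventually_sup] at hev
    obtain ⟨X, hX⟩ := eventually_atTop.1 hev.2
    intro t C
    set X' := max X (max t 0) with hX'def
    have hX'0 : (0:ℝ) ≤ X' := le_trans (le_max_right t 0) (le_max_right X _)
    have hX't : t ≤ X' := le_trans (le_max_left t 0) (le_max_right X _)
    have hθ'X : 1 ≤ θ' X' := by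
      have := hX X' (le_max_left X _)
      rwa [abs_of_nonneg (hpos X' hX'0)] at this
    set u := X' + max (θ t + C - θ X') 0 with hudef
    have hmax0 : 0 ≤ max (θ t + C - θ X') 0 := le_max_right _ _
    have huX : X' ≤ u := by rw [hudef]; linarith
    refine ⟨u, le_trans hX't huX, ?_⟩
    have h1 := hslope X' u huX
    have h2 : u - X' = max (θ t + C - θ X') 0 := by rw [hudef]; ring
    have h3 : θ t + C - θ X' ≤ max (θ t + C - θ X') 0 := le_max_left _ _
    nlinarith
  -- membership in Ω forces positivity of h
  have hkey : ∀ t, g t ≠ 0 → 0 < x₂ * Real.cos (θ t) - x₃ * Real.sin (θ t) := by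
    intro t ht
    have hmem : (t, x₂, x₃) ∈ Ω := by
      by_contra hn
      exact ht (hgvanish t hn)
    rw [hΩ] at hmem
    obtain ⟨q, hq, heq⟩ := hmem
    obtain ⟨h1, h2, h3⟩ : q.1 = t ∧ q.2.1 * Real.cos (θ q.1) + q.2.2 * Real.sin (θ q.1) = x₂
        ∧ q.2.2 * Real.cos (θ q.1) - q.2.1 * Real.sin (θ q.1) = x₃ := by
      refine ⟨congrArg Prod.fst heq, ?_, ?_⟩
      · exact congrArg (fun p => p.2.1) heq
      · exact congrArg (fun p => p.2.2) heq
    have hq2 : 0 < q.2.1 := hω_half hq.2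
    subst h1
    rw [← h2, ← h3]
    have := Real.sin_sq_add_cos_sq (θ q.1)
    nlinarith

  -- trivial case: (x₂,x₃) = 0
  by_cases hzero : x₂ = 0 ∧ x₃ = 0
  · have hg0 : ∀ t, g t = 0 := by
      intro t
      by_contra ht
      have := hkey t ht
      rw [hzero.1, hzero.2] at this
      simp at this
    have hgfun : g = fun _ => (0:ℝ) := funext hg0
    subst hgfun
    simp [deriv_const']
  -- polar coordinates for (x₂, x₃)
  have hz : (⟨x₂, x₃⟩ : ℂ) ≠ 0 := by
    intro hc
    rw [Complex.ext_iff] at hc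
    exact hzero ⟨hc.1, hc.2⟩
  set r : ℝ := ‖(⟨x₂, x₃⟩ : ℂ)‖ with hrdef
  set φ : ℝ := Complex.arg ⟨x₂, x₃⟩ with hφdef
  have hr0 : 0 < r := norm_pos_iff.mpr hz
  have hx2 : x₂ = r * Real.cos φ := by
    have := Complex.cos_arg hz
    rw [← hφdef] at this
    rw [this]
    field_simp [hrdef]
    rw [hrdef]
  have hx3 : x₃ = r * Real.sin φ := by
    have := Complex.sin_arg (⟨x₂, x₃⟩ : ℂ)
    rw [← hφdef] at this
    rw [this]
    field_simp [hrdef]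
    rw [hrdef]
  set h : ℝ → ℝ := fun u => x₂ * Real.cos (θ u) - x₃ * Real.sin (θ u) with hhdef
  have hhcos : ∀ u, h u = r * Real.cos (θ u + φ) := by
    intro u
    rw [hhdef]
    simp only
    rw [Real.cos_add, hx2, hx3]
    ring
  have hhc : Continuous h := ((continuous_const.mul (Real.continuous_cos.comp hθc)).sub
    (continuous_const.mul (Real.continuous_sin.comp hθc)))

  -- sublevel structure
  have hhclosed : IsClosed {v : ℝ | h v ≤ 0} := isClosed_le hhc continuous_const
  set SA : ℝ → Set ℝ := fun t => Icc 0 t ∩ {v | h v ≤ 0} with hSAdef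
  set SB : ℝ → Set ℝ := fun t => Ici t ∩ {v | h v ≤ 0} with hSBdef
  set A : ℝ → ℝ := fun t => sSup (SA t) with hAdef
  set B : ℝ → ℝ := fun t => sInf (SB t) with hBdef
  have hfind : ∀ u v : ℝ, u ≤ v → π < θ v - θ u → ∃ z ∈ Icc u v, h z < 0 := by
    intro u v huv hspan
    by_contra hno
    push_neg at hno
    have hcos : ∀ z ∈ Icc (θ u) (θ v), 0 ≤ Real.cos (z + φ) := by
      intro z hz
      obtain ⟨p, hp, hpz⟩ := intermediate_value_Icc huv hθc.continuousOn hz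
      have h0 := hno p hp
      rw [hhcos p, hpz] at h0
      by_contra hcneg
      push_neg at hcneg
      nlinarith
    have := cos_span (by linarith : θ u ≤ θ v) hcos
    linarith
  have hTval' : θ T = θ 0 + 2*π := hTval
  have hcomp : ∀ t, T < t → 0 < h t →
      0 ≤ A t ∧ A t < t ∧ t < B t ∧ h (A t) = 0 ∧ h (B t) = 0 ∧
      (∀ u, A t < u → u < B t → 0 < h u) ∧ θ (B t) - θ (A t) ≤ π := by
    intro t hTt hht
    have ht0 : 0 < t := lt_of_le_of_lt hT0 hTt
    have hθTt : θ T ≤ θ t := hθmono hT0 (le_of_lt ht0) (le_of_lt hTt)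
    have hθt2π : θ 0 + 2*π ≤ θ t := by rw [← hTval']; exact hθTt
    obtain ⟨z, hz, hzneg⟩ := hfind 0 t (le_of_lt ht0) (by linarith)
    have hSAne : (SA t).Nonempty := ⟨z, hz, le_of_lt hzneg⟩
    have hSAclosed : IsClosed (SA t) := isClosed_Icc.inter hhclosed
    have hSAbdd : BddAbove (SA t) := bddAbove_Icc.mono inter_subset_left
    obtain ⟨⟨hA0, hAt⟩, hAh⟩ := hSAclosed.csSup_mem hSAne hSAbdd
    have hAlt : A t < t := by
      rcases lt_or_eq_of_le hAt with hlt | heq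
      · exact hlt
      · exfalso; rw [heq] at hAh; simp only [mem_setOf_eq] at hAh; linarith
    have hApos : ∀ u, A t < u → u ≤ t → 0 < h u := by
      intro u h1 h2
      by_contra hle; push_neg at hle
      have hmem : u ∈ SA t := ⟨⟨le_trans hA0 (le_of_lt h1), h2⟩, hle⟩
      exact absurd (le_csSup hSAbdd hmem) (not_le.2 h1)
    have hAzero : h (A t) = 0 := by
      refine le_antisymm hAh ?_
      have htd : Tendsto h (𝓝[>] (A t)) (𝓝 (h (A t))) :=
        (hhc.tendsto _).mono_left nhdsWithin_le_nhds
      refine ge_of_tendsto htd ?_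
      filter_upwards [Ioc_mem_nhdsGT_of_mem ⟨le_refl (A t), hAlt⟩] with u hu
      exact le_of_lt (hApos u hu.1 hu.2)
    obtain ⟨v, hv1, hv2⟩ := hbig t (2*π)
    obtain ⟨z', hz', hzneg'⟩ := hfind t v hv1 (by linarith)
    have hSBne : (SB t).Nonempty := ⟨z', hz'.1, le_of_lt hzneg'⟩
    have hSBclosed : IsClosed (SB t) := isClosed_Ici.inter hhclosed
    have hSBbdd : BddBelow (SB t) := ⟨t, fun x hx => hx.1⟩
    obtain ⟨hBt, hBh⟩ := hSBclosed.csInf_mem hSBne hSBbdd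
    have hBgt : t < B t := by
      rcases lt_or_eq_of_le (mem_Ici.1 hBt) with hlt | heq
      · exact hlt
      · exfalso; rw [← heq] at hBh; simp only [mem_setOf_eq] at hBh; linarith
    have hBpos : ∀ u, t ≤ u → u < B t → 0 < h u := by
      intro u h1 h2
      by_contra hle; push_neg at hle
      have hmem : u ∈ SB t := ⟨h1, hle⟩
      exact absurd (csInf_le hSBbdd hmem) (not_le.2 h2)
    have hBzero : h (B t) = 0 := by
      refine le_antisymm hBh ?_
      have htd : Tendsto h (𝓝[<] (B t)) (𝓝 (h (B t))) :=
        (hhc.tendsto _).mono_left nhdsWithin_le_nhds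
      refine ge_of_tendsto htd ?_
      filter_upwards [Ico_mem_nhdsLT_of_mem ⟨hBgt, le_refl (B t)⟩] with u hu
      exact le_of_lt (hBpos u hu.1 hu.2)
    have hmid : ∀ u, A t < u → u < B t → 0 < h u := by
      intro u h1 h2
      rcases le_or_gt u t with hc | hc
      · exact hApos u h1 hc
      · exact hBpos u (le_of_lt hc) h2
    have hABle : A t ≤ B t := le_trans (le_of_lt hAlt) (le_of_lt hBgt)
    have hB0 : (0:ℝ) ≤ B t := le_trans hA0 hABle
    have hθAB : θ (A t) ≤ θ (B t) := hθmono hA0 hB0 hABle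
    have hspan2 : θ (B t) - θ (A t) ≤ π := by
      apply cos_span hθAB
      intro z hz
      obtain ⟨p, hp, hpz⟩ := intermediate_value_Icc hABle hθc.continuousOn hz
      have hhp : 0 ≤ h p := by
        rcases eq_or_lt_of_le hp.1 with he | h1
        · rw [← he, hAzero]
        · rcases eq_or_lt_of_le hp.2 with he | h2
          · rw [he, hBzero]
          · exact le_of_lt (hmid p h1 h2)
      rw [hhcos p, hpz] at hhp
      by_contra hcneg
      push_neg at hcneg
      nlinarith
    exact ⟨hA0, hAlt, hBgt, hAzero, hBzero, hmid, hspan2⟩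

  -- θinvp is monotone above θ 0
  have hinvmono : ∀ α β, θ 0 ≤ α → α ≤ β → θinvp α ≤ θinvp β := by
    intro α β hα hβ
    obtain ⟨hb0, hbval, -⟩ := hinvp β (le_trans hα hβ)
    obtain ⟨-, -, hmin⟩ := hinvp α hα
    have hmem : α ∈ Icc (θ 0) (θ (θinvp β)) := ⟨hα, by rw [hbval]; exact hβ⟩
    obtain ⟨z, hz, hzval⟩ := intermediate_value_Icc hb0 hθc.continuousOn hmem
    exact le_trans (hmin z hz.1 hzval) hz.2
  -- the weight function, extended monotonically
  set w : ℝ → ℝ := fun u => (θ' (θinvp (θ (max u T) - π)))^2 with hwdef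
  have hθmaxT : ∀ u, θ 0 ≤ θ (max u T) - π := by
    intro u
    have h1 : θ T ≤ θ (max u T) := hθmono hT0 (le_trans hT0 (le_max_right u T))
      (le_max_right u T)
    rw [hTval'] at h1; linarith
  have hwmono : Monotone w := by
    intro u v huv
    have m2 : θ (max u T) ≤ θ (max v T) := hθmono (le_trans hT0 (le_max_right u T))
      (le_trans hT0 (le_max_right v T)) (max_le_max huv (le_refl T))
    have m3 : θinvp (θ (max u T) - π) ≤ θinvp (θ (max v T) - π) :=
      hinvmono _ _ (hθmaxT u) (by linarith)
    have m4 := hmono m3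
    have m5 : 0 ≤ θ' (θinvp (θ (max u T) - π)) := hpos _ (hinvp _ (hθmaxT u)).1
    exact pow_le_pow_left₀ m5 m4 2
  have hwmeas : Measurable w := hwmono.measurable
  have hweq : ∀ u, T < u → w u = (θ' (θinvp (θ u - π)))^2 := by
    intro u hu
    rw [hwdef]
    simp only
    rw [max_eq_left (le_of_lt hu)]

  -- per-component estimates
  have hper : ∀ t, T < t → g t ≠ 0 →
      g (A t) = 0 ∧ g (B t) = 0 ∧
      (∀ u, A t < u → u < B t → T < u → w u ≤ (π/(B t - A t))^2) := by
    intro t hTt hgt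
    have hht : 0 < h t := hkey t hgt
    obtain ⟨hA0, hAlt, hBgt, hAzero, hBzero, hmid, hspan2⟩ := hcomp t hTt hht
    have hABlt : A t < B t := lt_trans hAlt hBgt
    have hB0 : (0:ℝ) ≤ B t := le_trans hA0 (le_of_lt hABlt)
    have hgA : g (A t) = 0 := by
      by_contra hne
      have h2 : 0 < h (A t) := hkey (A t) hne
      rw [hAzero] at h2
      exact lt_irrefl 0 h2
    have hgB : g (B t) = 0 := by
      by_contra hne
      have h2 : 0 < h (B t) := hkey (B t) hne
      rw [hBzero] at h2
      exact lt_irrefl 0 h2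
    refine ⟨hgA, hgB, ?_⟩
    intro u h1 h2 hTu
    have hu0 : 0 < u := lt_of_le_of_lt hT0 hTu
    have hθTu : θ 0 + 2*π ≤ θ u := by
      have := hθmono hT0 (le_of_lt hu0) (le_of_lt hTu)
      rw [hTval'] at this; linarith
    obtain ⟨hs0, hsval, hsmin⟩ := hinvp (θ u - π) (by linarith)
    have hθuB : θ u ≤ θ (B t) := hθmono (le_of_lt hu0) hB0 (le_of_lt h2)
    have hup : θ u - π ≤ θ (A t) := by linarith [hspan2]
    have hmem : θ u - π ∈ Icc (θ 0) (θ (A t)) := ⟨by linarith, hup⟩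
    obtain ⟨z, hz, hzval⟩ := intermediate_value_Icc hA0 hθc.continuousOn hmem
    have hsA : θinvp (θ u - π) ≤ A t := le_trans (hsmin z hz.1 hzval) hz.2
    have hd1 : θ' (θinvp (θ u - π)) ≤ θ' (A t) := hmono hsA
    have hd2 : (B t - A t) * θ' (A t) ≤ π := by
      have := hslope (A t) (B t) (le_of_lt hABlt)
      linarith [hspan2]
    have hBA : 0 < B t - A t := by linarith
    have hd3 : θ' (A t) ≤ π / (B t - A t) := by
      rw [le_div_iff₀ hBA]; linarith
    rw [hweq u hTu]
    exact pow_le_pow_left₀ (hpos _ hs0) (le_trans hd1 hd3) 2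

  -- the collection of components
  set E : Set (ℝ × ℝ) := {p | ∃ t, (T < t ∧ g t ≠ 0) ∧ p = (A t, B t)} with hEdef
  have hconst : ∀ t, T < t → g t ≠ 0 → ∀ u, A t < u → u < B t → A u = A t ∧ B u = B t := by
    intro t hTt hgt u h1 h2
    obtain ⟨hA0, hAlt, hBgt, hAzero, hBzero, hmid, -⟩ := hcomp t hTt (hkey t hgt)
    have hmemA : A t ∈ SA u := ⟨⟨hA0, le_of_lt h1⟩, le_of_eq hAzero⟩
    have hmemB : B t ∈ SB u := ⟨le_of_lt h2, le_of_eq hBzero⟩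
    constructor
    · apply le_antisymm
      · apply csSup_le ⟨A t, hmemA⟩
        intro v hv
        by_contra hgtv
        push_neg at hgtv
        have hv2 : 0 < h v := hmid v hgtv (lt_of_le_of_lt hv.1.2 h2)
        have hv3 := hv.2
        simp only [mem_setOf_eq] at hv3
        linarith
      · exact le_csSup (bddAbove_Icc.mono inter_subset_left) hmemA
    · apply le_antisymm
      · exact csInf_le ⟨u, fun x hx => hx.1⟩ hmemB
      · apply le_csInf ⟨B t, hmemB⟩
        intro v hv
        by_contra hltv
        push_neg at hltv
        have hv2 : 0 < h v := hmid v (lt_of_lt_of_le h1 hv.1) hltv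
        have hv3 := hv.2
        simp only [mem_setOf_eq] at hv3
        linarith
  have hdisjE : E.PairwiseDisjoint (fun p : ℝ × ℝ => Ioo p.1 p.2) := by
    intro p hp q hq hne
    obtain ⟨t, ⟨hTt, hgt⟩, rfl⟩ := hp
    obtain ⟨t', ⟨hTt', hgt'⟩, rfl⟩ := hq
    rw [Function.onFun]
    rw [Set.disjoint_left]
    intro u hu1 hu2
    apply hne
    obtain ⟨e1, e2⟩ := hconst t hTt hgt u hu1.1 hu1.2
    obtain ⟨e1', e2'⟩ := hconst t' hTt' hgt' u hu2.1 hu2.2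
    have e3 : A t = A t' := by rw [← e1, e1']
    have e4 : B t = B t' := by rw [← e2, e2']
    rw [e3, e4]
  have hcount : E.Countable := by
    apply hdisjE.countable_of_isOpen (fun p _ => isOpen_Ioo)
    rintro p ⟨t, ⟨hTt, hgt⟩, rfl⟩
    obtain ⟨-, hAlt, hBgt, -, -, -, -⟩ := hcomp t hTt (hkey t hgt)
    exact ⟨t, hAlt, hBgt⟩
  haveI : Countable ↥E := hcount.to_subtype
  set V : Set ℝ := ⋃ (p : ↥E), Ioo (p : ℝ × ℝ).1 (p : ℝ × ℝ).2 with hVdef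
  have hVopen : IsOpen V := isOpen_iUnion (fun p => isOpen_Ioo)
  have hVmeas : MeasurableSet V := hVopen.measurableSet
  -- integrability facts
  have hg2cs : HasCompactSupport (fun u => (g u)^2) :=
    hgsupp.comp_left (g := fun x : ℝ => x^2) (by simp)
  have hg2int : Integrable (fun u => (g u)^2) :=
    (hgc.pow 2).integrable_of_hasCompactSupport hg2cs
  have hg'2cs : HasCompactSupport (fun u => (deriv g u)^2) :=
    (hgsupp.deriv).comp_left (g := fun x : ℝ => x^2) (by simp)
  have hg'2int : Integrable (fun u => (deriv g u)^2) :=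
    (hg'c.pow 2).integrable_of_hasCompactSupport hg'2cs
  set fg : ℝ → ℝ := fun u => w u * (g u)^2 with hfgdef
  have hfgnn : ∀ u, 0 ≤ fg u := fun u => mul_nonneg (sq_nonneg _) (sq_nonneg _)
  have hfgint : Integrable fg := by
    obtain ⟨R, hRsub⟩ := hgsupp.isBounded.subset_closedBall 0
    obtain ⟨x0, hx0⟩ := (hgc.pow 2).exists_forall_ge_of_hasCompactSupport hg2cs
    have hsub : tsupport g ⊆ Icc (0 - R) (0 + R) := by
      rwa [← Real.closedBall_eq_Icc]
    set M : ℝ := w (0 + R) * (g x0)^2 with hMdef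
    apply Integrable.mono'
      (((integrableOn_const measure_Icc_lt_top.ne :
        IntegrableOn (fun _ => M) (Icc (0 - R) (0 + R)) volume)).integrable_indicator
        measurableSet_Icc)
    · exact (hwmeas.mul ((hgc.pow 2).measurable)).aestronglyMeasurable
    · filter_upwards with u
      rw [Real.norm_of_nonneg (hfgnn u)]
      by_cases hu : u ∈ Icc (0 - R) (0 + R)
      · rw [Set.indicator_of_mem hu]
        exact mul_le_mul (hwmono hu.2) (hx0 u) (sq_nonneg _) (sq_nonneg _)
      · rw [Set.indicator_of_notMem hu]
        have hgu : g u = 0 := image_eq_zero_of_notMem_tsupport (fun hc => hu (hsub hc))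
        rw [hfgdef]
        simp [hgu]

  -- final assembly
  have hS2V : ∀ u, T < u → g u ≠ 0 → u ∈ V := by
    intro u hTu hgu
    obtain ⟨-, hAlt, hBgt, -, -, -, -⟩ := hcomp u hTu (hkey u hgu)
    have hmem : ((A u, B u) : ℝ × ℝ) ∈ E := ⟨u, ⟨hTu, hgu⟩, rfl⟩
    rw [hVdef]
    exact mem_iUnion.2 ⟨⟨(A u, B u), hmem⟩, ⟨hAlt, hBgt⟩⟩
  have hstep1 : ∫ t in Ioi T, (θ' (θinvp (θ t - π)))^2 * (g t)^2 = ∫ t in Ioi T, fg t := by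
    apply setIntegral_congr_fun measurableSet_Ioi
    intro u hu
    rw [hfgdef]
    simp only
    rw [hweq u hu]
  have hsplit : ∫ t in Ioi T, fg t = ∫ t in Ioi T ∩ V, fg t := by
    have hids := integral_inter_add_diff (s := Ioi T) (t := V) (f := fg) (μ := volume)
      hVmeas hfgint.integrableOn
    have hzero2 : ∫ t in Ioi T \ V, fg t = 0 := by
      rw [setIntegral_congr_fun (g := fun _ => (0:ℝ)) (measurableSet_Ioi.diff hVmeas) ?_]
      · simp
      · intro u hu
        have hgu : g u = 0 := by
          by_contra hne
          exact hu.2 (hS2V u hu.1 hne)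
        rw [hfgdef]
        simp [hgu]
    linarith
  set Seg : ↥E → Set ℝ := fun p => Ioo (p : ℝ × ℝ).1 (p : ℝ × ℝ).2 with hSegdef
  have hSegMeas : ∀ p, MeasurableSet (Seg p) := fun p => measurableSet_Ioo
  have hSegDisj : Pairwise (Function.onFun Disjoint Seg) := by
    intro p q hpq
    exact hdisjE p.2 q.2 (fun hc => hpq (Subtype.ext hc))
  have hSegMeas' : ∀ p : ↥E, MeasurableSet (Seg p ∩ Ioi T) :=
    fun p => measurableSet_Ioo.inter measurableSet_Ioi
  have hSegDisj' : Pairwise (Function.onFun Disjoint fun p => Seg p ∩ Ioi T) := by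
    intro p q hpq
    exact (hSegDisj hpq).mono inter_subset_left inter_subset_left
  have hsetV : Ioi T ∩ V = ⋃ (p : ↥E), (Seg p ∩ Ioi T) := by
    rw [hVdef]
    ext u
    simp only [mem_inter_iff, mem_iUnion, mem_Ioi, hSegdef]
    tauto
  have hHS1 : HasSum (fun p : ↥E => ∫ t in Seg p ∩ Ioi T, fg t) (∫ t in Ioi T ∩ V, fg t) := by
    rw [hsetV]
    exact hasSum_integral_iUnion hSegMeas' hSegDisj' hfgint.integrableOn
  have hHS2 : HasSum (fun p : ↥E => ∫ t in Seg p, (deriv g t)^2)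
      (∫ t in V, (deriv g t)^2) := by
    rw [hVdef]
    exact hasSum_integral_iUnion hSegMeas hSegDisj hg'2int.integrableOn
  have hterm : ∀ p : ↥E, ∫ t in Seg p ∩ Ioi T, fg t ≤ ∫ t in Seg p, (deriv g t)^2 := by
    intro p
    obtain ⟨t, ⟨hTt, hgt⟩, hpe⟩ := p.2
    obtain ⟨hA0, hAlt, hBgt, -, -, -, -⟩ := hcomp t hTt (hkey t hgt)
    obtain ⟨hgA, hgB, hwb⟩ := hper t hTt hgt
    have hABlt : A t < B t := lt_trans hAlt hBgt
    have hc2 : (0:ℝ) ≤ (π/(B t - A t))^2 := sq_nonneg _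
    have hSegp : Seg p = Ioo (A t) (B t) := by
      rw [hSegdef]
      simp only
      rw [hpe]
    calc ∫ u in Seg p ∩ Ioi T, fg u
        ≤ ∫ u in Seg p ∩ Ioi T, (π/(B t - A t))^2 * (g u)^2 := by
          apply setIntegral_mono_on hfgint.integrableOn
            ((hg2int.const_mul _).integrableOn) (hSegMeas' p)
          intro u hu
          rw [hSegp] at hu
          exact mul_le_mul_of_nonneg_right (hwb u hu.1.1 hu.1.2 hu.2) (sq_nonneg _)
      _ ≤ ∫ u in Seg p, (π/(B t - A t))^2 * (g u)^2 := by
          apply setIntegral_mono_set ((hg2int.const_mul _).integrableOn)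
            (Eventually.of_forall (fun u => mul_nonneg hc2 (sq_nonneg _)))
            (HasSubset.Subset.eventuallyLE inter_subset_left)
      _ = (π/(B t - A t))^2 * ∫ u in Seg p, (g u)^2 := MeasureTheory.integral_const_mul _ _
      _ ≤ ∫ u in Seg p, (deriv g u)^2 := by
          rw [hSegp]
          have hw := wirtinger hg hABlt hgA hgB
          rw [intervalIntegral.integral_of_le (le_of_lt hABlt),
            intervalIntegral.integral_of_le (le_of_lt hABlt),
            integral_Ioc_eq_integral_Ioo, integral_Ioc_eq_integral_Ioo] at hw
          exact hw
  have hsum := Summable.tsum_le_tsum hterm hHS1.summable hHS2.summable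
  rw [hHS1.tsum_eq, hHS2.tsum_eq] at hsum
  have hVle : ∫ t in V, (deriv g t)^2 ≤ ∫ t, (deriv g t)^2 :=
    setIntegral_le_integral hg'2int (Eventually.of_forall (fun u => sq_nonneg _))
  rw [hstep1, hsplit]
  exact le_trans hsum hVle
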